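/- The number of 123-avoiding permutations of {1,...,n} is the Catalan number C(2n,n)/(n+1); hence the probability that a uniformly random permutation of {1,...,n} has no increasing subsequence of length 3 is C(2n,n)/(n+1)!. -/

import Mathlib

open Finset

attribute [local instance] Classical.propDecidable

namespace SS
open List

def Has123 (l : List ℕ) : Prop := ∃ a b c : ℕ, a < b ∧ b < c ∧ [a, b, c] <+ l
def Has132 (l : List ℕ) : Prop := ∃ a b c : ℕ, a < c ∧ c < b ∧ [a, b, c] <+ l
def Asc (m : ℕ) (l : List ℕ) : Prop := ∃ x y : ℕ, m < x ∧ x < y ∧ [x, y] <+ l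
def Desc (m : ℕ) (l : List ℕ) : Prop := ∃ x y : ℕ, m < y ∧ y < x ∧ [x, y] <+ l

def minOf : List ℕ → ℕ
  | [] => 0
  | a :: t => t.foldr min a

def maxOf : List ℕ → ℕ
  | [] => 0
  | a :: t => t.foldr max a

lemma foldr_min_le (a : ℕ) (t : List ℕ) : t.foldr min a ≤ a := by
  induction t with
  | nil => exact le_refl _
  | cons b t ih => exact (min_le_right _ _).trans ih

lemma foldr_min_le_mem {x : ℕ} (a : ℕ) {t : List ℕ} (hx : x ∈ t) : t.foldr min a ≤ x := by
  induction t with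
  | nil => cases hx
  | cons b t ih =>
    rcases List.mem_cons.1 hx with h | h
    · subst h; exact min_le_left _ _
    · exact (min_le_right _ _).trans (ih h)

lemma foldr_min_mem (a : ℕ) (t : List ℕ) : t.foldr min a = a ∨ t.foldr min a ∈ t := by
  induction t with
  | nil => exact Or.inl rfl
  | cons b t ih =>
    rcases le_total b (t.foldr min a) with h | h
    · right; rw [List.foldr_cons, min_eq_left h]; exact List.mem_cons_self
    · rw [List.foldr_cons, min_eq_right h]
      rcases ih with h' | h'
      · exact Or.inl h'
      · exact Or.inr (List.mem_cons_of_mem _ h')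

lemma le_foldr_max (a : ℕ) (t : List ℕ) : a ≤ t.foldr max a := by
  induction t with
  | nil => exact le_refl _
  | cons b t ih => exact ih.trans (le_max_right _ _)

lemma mem_le_foldr_max {x : ℕ} (a : ℕ) {t : List ℕ} (hx : x ∈ t) : x ≤ t.foldr max a := by
  induction t with
  | nil => cases hx
  | cons b t ih =>
    rcases List.mem_cons.1 hx with h | h
    · subst h; exact le_max_left _ _
    · exact (ih h).trans (le_max_right _ _)

lemma foldr_max_mem (a : ℕ) (t : List ℕ) : t.foldr max a = a ∨ t.foldr max a ∈ t := by
  induction t with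
  | nil => exact Or.inl rfl
  | cons b t ih =>
    rcases le_total (t.foldr max a) b with h | h
    · right; rw [List.foldr_cons, max_eq_left h]; exact List.mem_cons_self
    · rw [List.foldr_cons, max_eq_right h]
      rcases ih with h' | h'
      · exact Or.inl h'
      · exact Or.inr (List.mem_cons_of_mem _ h')

lemma minOf_mem {l : List ℕ} (h : l ≠ []) : minOf l ∈ l := by
  cases l with
  | nil => exact absurd rfl h
  | cons a t =>
    rcases foldr_min_mem a t with h' | h'
    · rw [minOf, h']; exact List.mem_cons_self
    · exact List.mem_cons_of_mem _ h'

lemma minOf_le {l : List ℕ} {x : ℕ} (hx : x ∈ l) : minOf l ≤ x := by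
  cases l with
  | nil => cases hx
  | cons a t =>
    rcases List.mem_cons.1 hx with h | h
    · subst h; exact foldr_min_le _ _
    · exact foldr_min_le_mem _ h

lemma maxOf_mem {l : List ℕ} (h : l ≠ []) : maxOf l ∈ l := by
  cases l with
  | nil => exact absurd rfl h
  | cons a t =>
    rcases foldr_max_mem a t with h' | h'
    · rw [maxOf, h']; exact List.mem_cons_self
    · exact List.mem_cons_of_mem _ h'

lemma le_maxOf {l : List ℕ} {x : ℕ} (hx : x ∈ l) : x ≤ maxOf l := by
  cases l with
  | nil => cases hx
  | cons a t =>
    rcases List.mem_cons.1 hx with h | h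
    · subst h; exact le_foldr_max _ _
    · exact mem_le_foldr_max _ h

lemma minOf_congr {l₁ l₂ : List ℕ} (h : l₁ ~ l₂) : minOf l₁ = minOf l₂ := by
  rcases eq_or_ne l₁ [] with h1 | h1
  · subst h1; rw [h.symm.eq_nil]
  · have h2 : l₂ ≠ [] := fun hh => h1 (by rw [hh] at h; exact h.eq_nil)
    exact le_antisymm (minOf_le (h.mem_iff.2 (minOf_mem h2)))
      (minOf_le (h.mem_iff.1 (minOf_mem h1)))

lemma maxOf_congr {l₁ l₂ : List ℕ} (h : l₁ ~ l₂) : maxOf l₁ = maxOf l₂ := by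
  rcases eq_or_ne l₁ [] with h1 | h1
  · subst h1; rw [h.symm.eq_nil]
  · have h2 : l₂ ≠ [] := fun hh => h1 (by rw [hh] at h; exact h.eq_nil)
    exact le_antisymm (le_maxOf (h.mem_iff.1 (maxOf_mem h1)))
      (le_maxOf (h.mem_iff.2 (maxOf_mem h2)))

lemma filter_erase_pos {l : List ℕ} {a : ℕ} {p : ℕ → Bool} (pa : p a = true) :
    (l.erase a).filter p = (l.filter p).erase a := by
  induction l with
  | nil => rfl
  | cons b t ih =>
    by_cases hb : b = a
    · subst hb; simp [List.erase_cons, List.filter_cons, pa]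
    · by_cases hpb : p b <;>
        simp [List.erase_cons, List.filter_cons, hb, hpb, ih, Ne.symm hb]

lemma filter_erase_neg {l : List ℕ} {a : ℕ} {p : ℕ → Bool} (pa : p a = false) :
    (l.erase a).filter p = l.filter p := by
  induction l with
  | nil => rfl
  | cons b t ih =>
    by_cases hb : b = a
    · subst hb; simp [List.erase_cons, List.filter_cons, pa]
    · by_cases hpb : p b <;>
        simp [List.erase_cons, List.filter_cons, hb, hpb, ih]

lemma length_filter_split (l : List ℕ) (p : ℕ → Bool) :
    (l.filter p).length + (l.filter (fun x => ! p x)).length = l.length := by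
  induction l with
  | nil => rfl
  | cons a t ih => by_cases h : p a <;> simp [List.filter_cons, h] <;> omega

def bigmin (m : ℕ) (pool : List ℕ) : ℕ := minOf (pool.filter (fun x => decide (m < x)))
def bigmax (m : ℕ) (pool : List ℕ) : ℕ := maxOf (pool.filter (fun x => decide (m < x)))

def ss : ℕ → List ℕ → List ℕ → List ℕ
  | _, _, [] => []
  | m, pool, a :: t =>
    if a < m then a :: ss a (pool.erase a) t
    else bigmin m pool :: ss m (pool.erase (bigmin m pool)) t

def gg : ℕ → List ℕ → List ℕ → List ℕ
  | _, _, [] => []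
  | m, pool, a :: t =>
    if a < m then a :: gg a (pool.erase a) t
    else bigmax m pool :: gg m (pool.erase (bigmax m pool)) t

structure INV (m : ℕ) (pool l : List ℕ) : Prop where
  nodup_l : l.Nodup
  nodup_p : pool.Nodup
  ne_l : ∀ x ∈ l, x ≠ m
  ne_p : ∀ x ∈ pool, x ≠ m
  len : l.length = pool.length
  small : l.filter (fun x => decide (x < m)) ~ pool.filter (fun x => decide (x < m))

lemma INV.big_len {m : ℕ} {pool l : List ℕ} (h : INV m pool l) :
    (l.filter (fun x => decide (m < x))).length
      = (pool.filter (fun x => decide (m < x))).length := by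
  have h1 := length_filter_split l (fun x => decide (x < m))
  have h2 := length_filter_split pool (fun x => decide (x < m))
  have e1 : l.filter (fun x => ! decide (x < m)) = l.filter (fun x => decide (m < x)) := by
    apply List.filter_congr
    intro x hx
    have hne := h.ne_l x hx
    by_cases hxm : x < m
    · simp [hxm, show ¬ m < x by omega]
    · simp [hxm, show m < x by omega]
  have e2 : pool.filter (fun x => ! decide (x < m))
      = pool.filter (fun x => decide (m < x)) := by
    apply List.filter_congr
    intro x hx
    have hne := h.ne_p x hx
    by_cases hxm : x < m
    · simp [hxm, show ¬ m < x by omega]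
    · simp [hxm, show m < x by omega]
  rw [e1] at h1
  rw [e2] at h2
  have h3 := h.small.length_eq
  have h4 := h.len
  omega

lemma INV.step_lt {m a : ℕ} {pool t : List ℕ} (h : INV m pool (a :: t)) (ha : a < m) :
    a ∈ pool ∧ INV a (pool.erase a) t := by
  have hfl : (a :: t).filter (fun x => decide (x < m))
      = a :: t.filter (fun x => decide (x < m)) := by
    simp [List.filter_cons, ha]
  have hapool : a ∈ pool := by
    have : a ∈ pool.filter (fun x => decide (x < m)) := by
      apply h.small.mem_iff.1
      rw [hfl]; exact List.mem_cons_self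
    exact List.mem_of_mem_filter this
  refine ⟨hapool, ?_, h.nodup_p.erase _, ?_, ?_, ?_, ?_⟩
  · exact h.nodup_l.of_cons
  · intro x hx
    intro hxa; subst hxa
    exact (List.nodup_cons.1 h.nodup_l).1 hx
  · intro x hx hxa; subst hxa
    exact ((List.Nodup.mem_erase_iff h.nodup_p).1 hx).1 rfl
  · have hlen := h.len
    rw [List.length_cons] at hlen
    rw [List.length_erase_of_mem hapool]
    omega
  · have key := h.small.filter (fun x => decide (x < a))
    rw [hfl] at key
    have e1 : ((a :: t.filter (fun x => decide (x < m))).filter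
        (fun x => decide (x < a))) = t.filter (fun x => decide (x < a)) := by
      rw [List.filter_cons]
      simp only [lt_irrefl, decide_false]
      rw [List.filter_filter]
      apply List.filter_congr
      intro x _
      by_cases hx : x < a <;> simp [hx] <;> omega
    have e2 : (pool.filter (fun x => decide (x < m))).filter (fun x => decide (x < a))
        = (pool.erase a).filter (fun x => decide (x < a)) := by
      rw [List.filter_filter]
      rw [filter_erase_neg (by simp : decide (a < a) = false)]
      apply List.filter_congr
      intro x _
      by_cases hx : x < a <;> simp [hx] <;> omega
    rw [e1, e2] at key
    exact key

lemma bigmin_spec {m : ℕ} {pool : List ℕ}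
    (hsne : (pool.filter (fun x => decide (m < x))) ≠ []) :
    bigmin m pool ∈ pool ∧ m < bigmin m pool ∧
      ∀ x ∈ pool, m < x → bigmin m pool ≤ x := by
  have hbmem' : bigmin m pool ∈ pool.filter (fun x => decide (m < x)) := minOf_mem hsne
  refine ⟨List.mem_of_mem_filter hbmem', by simpa using List.of_mem_filter hbmem', ?_⟩
  intro x hx hmx
  exact minOf_le (List.mem_filter.2 ⟨hx, by simpa using hmx⟩)

lemma bigmax_spec {m : ℕ} {pool : List ℕ}
    (hsne : (pool.filter (fun x => decide (m < x))) ≠ []) :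
    bigmax m pool ∈ pool ∧ m < bigmax m pool ∧
      ∀ x ∈ pool, m < x → x ≤ bigmax m pool := by
  have hbmem' : bigmax m pool ∈ pool.filter (fun x => decide (m < x)) := maxOf_mem hsne
  refine ⟨List.mem_of_mem_filter hbmem', by simpa using List.of_mem_filter hbmem', ?_⟩
  intro x hx hmx
  exact le_maxOf (List.mem_filter.2 ⟨hx, by simpa using hmx⟩)

lemma INV.erase_big {m a b : ℕ} {pool t : List ℕ} (h : INV m pool (a :: t))
    (ha : ¬ a < m) (hbp : b ∈ pool) (hmb : m < b) : INV m (pool.erase b) t := by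
  refine ⟨h.nodup_l.of_cons, h.nodup_p.erase _, ?_, ?_, ?_, ?_⟩
  · intro x hx; exact h.ne_l x (List.mem_cons_of_mem _ hx)
  · intro x hx; exact h.ne_p x (List.mem_of_mem_erase hx)
  · have hlen := h.len
    rw [List.length_cons] at hlen
    rw [List.length_erase_of_mem hbp]
    omega
  · have e0 : (a :: t).filter (fun x => decide (x < m))
        = t.filter (fun x => decide (x < m)) := by
      simp [List.filter_cons, ha]
    have e1 : (pool.erase b).filter (fun x => decide (x < m))
        = pool.filter (fun x => decide (x < m)) := by
      apply filter_erase_neg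
      simp only [decide_eq_false_iff_not]
      omega
    rw [e1]
    have hs := h.small
    rw [e0] at hs
    exact hs

lemma INV.sne {m a : ℕ} {pool t : List ℕ} (h : INV m pool (a :: t)) (ha : ¬ a < m) :
    (pool.filter (fun x => decide (m < x))) ≠ [] := by
  have hma : m < a := by
    have := h.ne_l a (List.mem_cons_self)
    omega
  intro hnil
  have hbl := h.big_len
  rw [hnil] at hbl
  simp only [List.length_nil] at hbl
  have hmem : a ∈ (a :: t).filter (fun x => decide (m < x)) := by
    simp [List.filter_cons, hma]
  rw [List.length_eq_zero_iff] at hbl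
  rw [hbl] at hmem
  cases hmem


lemma ss_perm {l : List ℕ} : ∀ {m : ℕ} {pool : List ℕ}, INV m pool l → ss m pool l ~ pool := by
  induction l with
  | nil =>
    intro m pool h
    have : pool.length = 0 := by have := h.len; simpa using this.symm
    rw [List.length_eq_zero_iff] at this
    rw [this, ss]
  | cons a t ih =>
    intro m pool h
    by_cases ha : a < m
    · obtain ⟨hap, hinv⟩ := h.step_lt ha
      rw [ss, if_pos ha]
      exact ((ih hinv).cons a).trans (List.perm_cons_erase hap).symm
    · have hsne := h.sne ha
      obtain ⟨hbp, hmb, -⟩ := bigmin_spec hsne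
      have hinv := h.erase_big ha hbp hmb
      rw [ss, if_neg ha]
      exact ((ih hinv).cons _).trans (List.perm_cons_erase hbp).symm

lemma gg_perm {l : List ℕ} : ∀ {m : ℕ} {pool : List ℕ}, INV m pool l → gg m pool l ~ pool := by
  induction l with
  | nil =>
    intro m pool h
    have : pool.length = 0 := by have := h.len; simpa using this.symm
    rw [List.length_eq_zero_iff] at this
    rw [this, gg]
  | cons a t ih =>
    intro m pool h
    by_cases ha : a < m
    · obtain ⟨hap, hinv⟩ := h.step_lt ha
      rw [gg, if_pos ha]
      exact ((ih hinv).cons a).trans (List.perm_cons_erase hap).symm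
    · have hsne := h.sne ha
      obtain ⟨hbp, hmb, -⟩ := bigmax_spec hsne
      have hinv := h.erase_big ha hbp hmb
      rw [gg, if_neg ha]
      exact ((ih hinv).cons _).trans (List.perm_cons_erase hbp).symm

lemma ss_congr {l : List ℕ} : ∀ {m : ℕ} {pool₁ pool₂ : List ℕ}, pool₁ ~ pool₂ →
    ss m pool₁ l = ss m pool₂ l := by
  induction l with
  | nil => intro m p1 p2 _; rw [ss, ss]
  | cons a t ih =>
    intro m p1 p2 hp
    have hbm : bigmin m p1 = bigmin m p2 := minOf_congr (hp.filter _)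
    by_cases ha : a < m
    · rw [ss, if_pos ha, ss, if_pos ha, ih (hp.erase a)]
    · rw [ss, if_neg ha, ss, if_neg ha, hbm, ih (hp.erase _)]

lemma gg_congr {l : List ℕ} : ∀ {m : ℕ} {pool₁ pool₂ : List ℕ}, pool₁ ~ pool₂ →
    gg m pool₁ l = gg m pool₂ l := by
  induction l with
  | nil => intro m p1 p2 _; rw [gg, gg]
  | cons a t ih =>
    intro m p1 p2 hp
    have hbm : bigmax m p1 = bigmax m p2 := maxOf_congr (hp.filter _)
    by_cases ha : a < m
    · rw [gg, if_pos ha, gg, if_pos ha, ih (hp.erase a)]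
    · rw [gg, if_neg ha, gg, if_neg ha, hbm, ih (hp.erase _)]

lemma triple_sublist_cons {p q r b : ℕ} {t : List ℕ} (h : [p, q, r] <+ b :: t) :
    [p, q, r] <+ t ∨ (p = b ∧ [q, r] <+ t) := by
  rcases List.sublist_cons_iff.1 h with h' | ⟨rr, hr1, hr2⟩
  · exact Or.inl h'
  · cases hr1
    exact Or.inr ⟨rfl, hr2⟩

lemma pair_sublist_cons {x y b : ℕ} {t : List ℕ} (h : [x, y] <+ b :: t) :
    [x, y] <+ t ∨ (x = b ∧ y ∈ t) := by
  rcases List.sublist_cons_iff.1 h with h' | ⟨rr, hr1, hr2⟩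
  · exact Or.inl h'
  · cases hr1
    exact Or.inr ⟨rfl, List.singleton_sublist.1 hr2⟩

lemma ss_av {l : List ℕ} : ∀ {m : ℕ} {pool : List ℕ}, INV m pool l →
    (¬ Has132 (ss m pool l)) ∧ (¬ Desc m (ss m pool l)) := by
  induction l with
  | nil =>
    intro m pool h
    rw [ss]
    constructor
    · rintro ⟨a, b, c, -, -, hs⟩; exact absurd (List.eq_nil_of_sublist_nil hs) (by simp)
    · rintro ⟨x, y, -, -, hs⟩; exact absurd (List.eq_nil_of_sublist_nil hs) (by simp)
  | cons a t ih =>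
    intro m pool h
    by_cases ha : a < m
    · obtain ⟨hap, hinv⟩ := h.step_lt ha
      obtain ⟨h1, h2⟩ := ih hinv
      rw [ss, if_pos ha]
      constructor
      · rintro ⟨p, q, r, hpr, hrq, hsub⟩
        rcases triple_sublist_cons hsub with hsub' | ⟨hpa, hsub'⟩
        · exact h1 ⟨p, q, r, hpr, hrq, hsub'⟩
        · subst hpa
          exact h2 ⟨q, r, hpr, hrq, hsub'⟩
      · rintro ⟨x, y, hmy, hyx, hsub⟩
        rcases pair_sublist_cons hsub with hsub' | ⟨hxa, hy⟩
        · rcases lt_or_ge a y with hay | hya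
          · exact h2 ⟨x, y, hay, hyx, hsub'⟩
          · omega
        · subst hxa; omega
    · have hsne := h.sne ha
      obtain ⟨hbp, hmb, hbmin⟩ := bigmin_spec hsne
      have hinv := h.erase_big ha hbp hmb
      obtain ⟨h1, h2⟩ := ih hinv
      have hsubpool : ∀ y ∈ ss m (pool.erase (bigmin m pool)) t, y ∈ pool.erase (bigmin m pool) :=
        fun y hy => (ss_perm hinv).subset hy
      rw [ss, if_neg ha]
      constructor
      · rintro ⟨p, q, r, hpr, hrq, hsub⟩
        rcases triple_sublist_cons hsub with hsub' | ⟨hpb, hsub'⟩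
        · exact h1 ⟨p, q, r, hpr, hrq, hsub'⟩
        · subst hpb
          exact h2 ⟨q, r, lt_trans hmb hpr, hrq, hsub'⟩
      · rintro ⟨x, y, hmy, hyx, hsub⟩
        rcases pair_sublist_cons hsub with hsub' | ⟨hxb, hy⟩
        · exact h2 ⟨x, y, hmy, hyx, hsub'⟩
        · subst hxb
          have hyp : y ∈ pool := List.mem_of_mem_erase (hsubpool y hy)
          have := hbmin y hyp hmy
          omega

lemma gg_av {l : List ℕ} : ∀ {m : ℕ} {pool : List ℕ}, INV m pool l →
    (¬ Has123 (gg m pool l)) ∧ (¬ Asc m (gg m pool l)) := by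
  induction l with
  | nil =>
    intro m pool h
    rw [gg]
    constructor
    · rintro ⟨a, b, c, -, -, hs⟩; exact absurd (List.eq_nil_of_sublist_nil hs) (by simp)
    · rintro ⟨x, y, -, -, hs⟩; exact absurd (List.eq_nil_of_sublist_nil hs) (by simp)
  | cons a t ih =>
    intro m pool h
    by_cases ha : a < m
    · obtain ⟨hap, hinv⟩ := h.step_lt ha
      obtain ⟨h1, h2⟩ := ih hinv
      rw [gg, if_pos ha]
      constructor
      · rintro ⟨p, q, r, hpq, hqr, hsub⟩
        rcases triple_sublist_cons hsub with hsub' | ⟨hpa, hsub'⟩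
        · exact h1 ⟨p, q, r, hpq, hqr, hsub'⟩
        · subst hpa
          exact h2 ⟨q, r, hpq, hqr, hsub'⟩
      · rintro ⟨x, y, hmx, hxy, hsub⟩
        rcases pair_sublist_cons hsub with hsub' | ⟨hxa, hy⟩
        · rcases lt_or_ge a x with hax | hxa
          · exact h2 ⟨x, y, hax, hxy, hsub'⟩
          · omega
        · subst hxa; omega
    · have hsne := h.sne ha
      obtain ⟨hbp, hmb, hbmax⟩ := bigmax_spec hsne
      have hinv := h.erase_big ha hbp hmb
      obtain ⟨h1, h2⟩ := ih hinv
      have hsubpool : ∀ y ∈ gg m (pool.erase (bigmax m pool)) t, y ∈ pool.erase (bigmax m pool) :=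
        fun y hy => (gg_perm hinv).subset hy
      rw [gg, if_neg ha]
      constructor
      · rintro ⟨p, q, r, hpq, hqr, hsub⟩
        rcases triple_sublist_cons hsub with hsub' | ⟨hpb, hsub'⟩
        · exact h1 ⟨p, q, r, hpq, hqr, hsub'⟩
        · subst hpb
          exact h2 ⟨q, r, lt_trans hmb hpq, hqr, hsub'⟩
      · rintro ⟨x, y, hmx, hxy, hsub⟩
        rcases pair_sublist_cons hsub with hsub' | ⟨hxb, hy⟩
        · exact h2 ⟨x, y, hmx, hxy, hsub'⟩
        · subst hxb
          have hyp : y ∈ pool := List.mem_of_mem_erase (hsubpool y hy)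
          have := hbmax y hyp (lt_trans hmx hxy)
          omega


lemma sublist_tail_has123 {t : List ℕ} {a : ℕ} (h : Has123 t) : Has123 (a :: t) := by
  obtain ⟨x, y, z, h1, h2, hs⟩ := h
  exact ⟨x, y, z, h1, h2, hs.trans (List.sublist_cons_self _ _)⟩

lemma sublist_tail_has132 {t : List ℕ} {a : ℕ} (h : Has132 t) : Has132 (a :: t) := by
  obtain ⟨x, y, z, h1, h2, hs⟩ := h
  exact ⟨x, y, z, h1, h2, hs.trans (List.sublist_cons_self _ _)⟩

lemma ss_inj {l₁ : List ℕ} : ∀ {m : ℕ} {pool l₂ : List ℕ}, INV m pool l₁ → INV m pool l₂ →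
    ¬ Has123 l₁ → ¬ Asc m l₁ → ¬ Has123 l₂ → ¬ Asc m l₂ → l₁ ~ l₂ →
    ss m pool l₁ = ss m pool l₂ → l₁ = l₂ := by
  induction l₁ with
  | nil =>
    intro m pool l₂ _ _ _ _ _ _ hp _
    exact (hp.symm.eq_nil).symm
  | cons a t ih =>
    intro m pool l₂ h₁ h₂ H1 H2 K1 K2 hp he
    cases l₂ with
    | nil => exact absurd hp.eq_nil (by simp)
    | cons a' t' =>
      by_cases ha : a < m
      · by_cases ha' : a' < m
        · rw [ss, if_pos ha, ss, if_pos ha'] at he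
          obtain ⟨hhead, htail⟩ := List.cons_eq_cons.1 he
          subst hhead
          have hstep₁ := (h₁.step_lt ha).2
          have hstep₂ := (h₂.step_lt ha').2
          have ht : t = t' := by
            apply ih hstep₁ hstep₂ ?_ ?_ ?_ ?_ hp.cons_inv htail
            · exact fun hh => H1 (sublist_tail_has123 hh)
            · rintro ⟨x, y, hax, hxy, hs⟩
              exact H1 ⟨a, x, y, hax, hxy, List.cons_sublist_cons.2 hs⟩
            · exact fun hh => K1 (sublist_tail_has123 hh)
            · rintro ⟨x, y, hax, hxy, hs⟩
              exact K1 ⟨a, x, y, hax, hxy, List.cons_sublist_cons.2 hs⟩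
          rw [ht]
        · rw [ss, if_pos ha, ss, if_neg ha'] at he
          obtain ⟨hhead, -⟩ := List.cons_eq_cons.1 he
          obtain ⟨-, hmb, -⟩ := bigmin_spec (h₂.sne ha')
          omega
      · by_cases ha' : a' < m
        · rw [ss, if_neg ha, ss, if_pos ha'] at he
          obtain ⟨hhead, -⟩ := List.cons_eq_cons.1 he
          obtain ⟨-, hmb, -⟩ := bigmin_spec (h₁.sne ha)
          omega
        · rw [ss, if_neg ha, ss, if_neg ha'] at he
          obtain ⟨-, htail⟩ := List.cons_eq_cons.1 he
          have hma : m < a := by have := h₁.ne_l a (List.mem_cons_self); omega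
          have hma' : m < a' := by have := h₂.ne_l a' (List.mem_cons_self); omega
          have hmax₁ : ∀ x ∈ a :: t, m < x → x ≤ a := by
            intro x hx hmx
            rcases List.mem_cons.1 hx with h | h
            · omega
            · by_contra hax
              exact H2 ⟨a, x, hma, by omega,
                List.cons_sublist_cons.2 (List.singleton_sublist.2 h)⟩
          have hmax₂ : ∀ x ∈ a' :: t', m < x → x ≤ a' := by
            intro x hx hmx
            rcases List.mem_cons.1 hx with h | h
            · omega
            · by_contra hax
              exact K2 ⟨a', x, hma', by omega,
                List.cons_sublist_cons.2 (List.singleton_sublist.2 h)⟩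
          have haa : a = a' := by
            have h1 : a' ≤ a := hmax₁ a' (hp.mem_iff.2 (List.mem_cons_self)) hma'
            have h2 : a ≤ a' := hmax₂ a (hp.mem_iff.1 (List.mem_cons_self)) hma
            omega
          subst haa
          obtain ⟨hbp, hmb, -⟩ := bigmin_spec (h₁.sne ha)
          have hstep₁ := h₁.erase_big ha hbp hmb
          have hstep₂ := h₂.erase_big ha' hbp hmb
          have ht : t = t' := by
            apply ih hstep₁ hstep₂ ?_ ?_ ?_ ?_ hp.cons_inv htail
            · exact fun hh => H1 (sublist_tail_has123 hh)
            · rintro ⟨x, y, hax, hxy, hs⟩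
              exact H2 ⟨x, y, hax, hxy, hs.trans (List.sublist_cons_self _ _)⟩
            · exact fun hh => K1 (sublist_tail_has123 hh)
            · rintro ⟨x, y, hax, hxy, hs⟩
              exact K2 ⟨x, y, hax, hxy, hs.trans (List.sublist_cons_self _ _)⟩
          rw [ht]

lemma gg_inj {l₁ : List ℕ} : ∀ {m : ℕ} {pool l₂ : List ℕ}, INV m pool l₁ → INV m pool l₂ →
    ¬ Has132 l₁ → ¬ Desc m l₁ → ¬ Has132 l₂ → ¬ Desc m l₂ → l₁ ~ l₂ →
    gg m pool l₁ = gg m pool l₂ → l₁ = l₂ := by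
  induction l₁ with
  | nil =>
    intro m pool l₂ _ _ _ _ _ _ hp _
    exact (hp.symm.eq_nil).symm
  | cons a t ih =>
    intro m pool l₂ h₁ h₂ H1 H2 K1 K2 hp he
    cases l₂ with
    | nil => exact absurd hp.eq_nil (by simp)
    | cons a' t' =>
      by_cases ha : a < m
      · by_cases ha' : a' < m
        · rw [gg, if_pos ha, gg, if_pos ha'] at he
          obtain ⟨hhead, htail⟩ := List.cons_eq_cons.1 he
          subst hhead
          have hstep₁ := (h₁.step_lt ha).2
          have hstep₂ := (h₂.step_lt ha').2
          have ht : t = t' := by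
            apply ih hstep₁ hstep₂ ?_ ?_ ?_ ?_ hp.cons_inv htail
            · exact fun hh => H1 (sublist_tail_has132 hh)
            · rintro ⟨x, y, hay, hyx, hs⟩
              exact H1 ⟨a, x, y, hay, hyx, List.cons_sublist_cons.2 hs⟩
            · exact fun hh => K1 (sublist_tail_has132 hh)
            · rintro ⟨x, y, hay, hyx, hs⟩
              exact K1 ⟨a, x, y, hay, hyx, List.cons_sublist_cons.2 hs⟩
          rw [ht]
        · rw [gg, if_pos ha, gg, if_neg ha'] at he
          obtain ⟨hhead, -⟩ := List.cons_eq_cons.1 he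
          obtain ⟨-, hmb, -⟩ := bigmax_spec (h₂.sne ha')
          omega
      · by_cases ha' : a' < m
        · rw [gg, if_neg ha, gg, if_pos ha'] at he
          obtain ⟨hhead, -⟩ := List.cons_eq_cons.1 he
          obtain ⟨-, hmb, -⟩ := bigmax_spec (h₁.sne ha)
          omega
        · rw [gg, if_neg ha, gg, if_neg ha'] at he
          obtain ⟨-, htail⟩ := List.cons_eq_cons.1 he
          have hma : m < a := by have := h₁.ne_l a (List.mem_cons_self); omega
          have hma' : m < a' := by have := h₂.ne_l a' (List.mem_cons_self); omega
          have hmin₁ : ∀ x ∈ a :: t, m < x → a ≤ x := by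
            intro x hx hmx
            rcases List.mem_cons.1 hx with h | h
            · omega
            · by_contra hax
              exact H2 ⟨a, x, hmx, by omega,
                List.cons_sublist_cons.2 (List.singleton_sublist.2 h)⟩
          have hmin₂ : ∀ x ∈ a' :: t', m < x → a' ≤ x := by
            intro x hx hmx
            rcases List.mem_cons.1 hx with h | h
            · omega
            · by_contra hax
              exact K2 ⟨a', x, hmx, by omega,
                List.cons_sublist_cons.2 (List.singleton_sublist.2 h)⟩
          have haa : a = a' := by
            have h1 : a ≤ a' := hmin₁ a' (hp.mem_iff.2 (List.mem_cons_self)) hma'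
            have h2 : a' ≤ a := hmin₂ a (hp.mem_iff.1 (List.mem_cons_self)) hma
            omega
          subst haa
          obtain ⟨hbp, hmb, -⟩ := bigmax_spec (h₁.sne ha)
          have hstep₁ := h₁.erase_big ha hbp hmb
          have hstep₂ := h₂.erase_big ha' hbp hmb
          have ht : t = t' := by
            apply ih hstep₁ hstep₂ ?_ ?_ ?_ ?_ hp.cons_inv htail
            · exact fun hh => H1 (sublist_tail_has132 hh)
            · rintro ⟨x, y, hay, hyx, hs⟩
              exact H2 ⟨x, y, hay, hyx, hs.trans (List.sublist_cons_self _ _)⟩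
            · exact fun hh => K1 (sublist_tail_has132 hh)
            · rintro ⟨x, y, hay, hyx, hs⟩
              exact K2 ⟨x, y, hay, hyx, hs.trans (List.sublist_cons_self _ _)⟩
          rw [ht]


noncomputable def A123 (n : ℕ) : Finset (List ℕ) :=
  ((List.range n).permutations.toFinset).filter (fun l => ¬ Has123 l)
noncomputable def A132 (n : ℕ) : Finset (List ℕ) :=
  ((List.range n).permutations.toFinset).filter (fun l => ¬ Has132 l)

lemma mem_A123 {n : ℕ} {l : List ℕ} : l ∈ A123 n ↔ l ~ List.range n ∧ ¬ Has123 l := by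
  simp [A123, List.mem_permutations, Finset.mem_filter, List.mem_toFinset]

lemma mem_A132 {n : ℕ} {l : List ℕ} : l ∈ A132 n ↔ l ~ List.range n ∧ ¬ Has132 l := by
  simp [A132, List.mem_permutations, Finset.mem_filter, List.mem_toFinset]

lemma inv_pair {n : ℕ} {l₁ l₂ : List ℕ} (h₁ : l₁ ~ List.range n) (h₂ : l₂ ~ List.range n) :
    INV n l₁ l₂ := by
  refine ⟨h₂.nodup_iff.2 (@List.nodup_range n), h₁.nodup_iff.2 (@List.nodup_range n), ?_, ?_, ?_, ?_⟩
  · intro x hx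
    have : x < n := List.mem_range.1 (h₂.subset hx)
    omega
  · intro x hx
    have : x < n := List.mem_range.1 (h₁.subset hx)
    omega
  · rw [h₂.length_eq, h₁.length_eq]
  · exact (h₂.trans h₁.symm).filter _

lemma no_asc {n : ℕ} {l : List ℕ} (h : l ~ List.range n) : ¬ Asc n l := by
  rintro ⟨x, y, hnx, -, hs⟩
  have : x < n := List.mem_range.1 (h.subset (hs.subset (List.mem_cons_self)))
  omega

lemma no_desc {n : ℕ} {l : List ℕ} (h : l ~ List.range n) : ¬ Desc n l := by
  rintro ⟨x, y, hny, -, hs⟩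
  have : y < n := List.mem_range.1
    (h.subset (hs.subset (List.mem_cons_of_mem _ (List.mem_cons_self))))
  omega

lemma card_A123_eq_card_A132 (n : ℕ) : (A123 n).card = (A132 n).card := by
  apply _root_.le_antisymm
  · apply Finset.card_le_card_of_injOn (fun l => ss n l l)
    · intro l hl
      obtain ⟨hlp, hH⟩ := mem_A123.1 hl
      have hinv := inv_pair hlp hlp
      exact mem_A132.2 ⟨(ss_perm hinv).trans hlp, (ss_av hinv).1⟩
    · intro l₁ h₁ l₂ h₂ he
      obtain ⟨h₁p, h₁H⟩ := mem_A123.1 h₁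
      obtain ⟨h₂p, h₂H⟩ := mem_A123.1 h₂
      have hp : l₂ ~ l₁ := h₂p.trans h₁p.symm
      simp only at he
      rw [show ss n l₂ l₂ = ss n l₁ l₂ from ss_congr hp] at he
      exact ss_inj (inv_pair h₁p h₁p) (inv_pair h₁p h₂p) h₁H (no_asc h₁p) h₂H (no_asc h₂p)
        hp.symm he
  · apply Finset.card_le_card_of_injOn (fun l => gg n l l)
    · intro l hl
      obtain ⟨hlp, hH⟩ := mem_A132.1 hl
      have hinv := inv_pair hlp hlp
      exact mem_A123.2 ⟨(gg_perm hinv).trans hlp, (gg_av hinv).1⟩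
    · intro l₁ h₁ l₂ h₂ he
      obtain ⟨h₁p, h₁H⟩ := mem_A132.1 h₁
      obtain ⟨h₂p, h₂H⟩ := mem_A132.1 h₂
      have hp : l₂ ~ l₁ := h₂p.trans h₁p.symm
      simp only at he
      rw [show gg n l₂ l₂ = gg n l₁ l₂ from gg_congr hp] at he
      exact gg_inj (inv_pair h₁p h₁p) (inv_pair h₁p h₂p) h₁H (no_desc h₁p) h₂H (no_desc h₂p)
        hp.symm he


lemma perm_range_of {n : ℕ} {l : List ℕ} (hnd : l.Nodup) (hlen : l.length = n)
    (hlt : ∀ x ∈ l, x < n) : l ~ List.range n := by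
  apply List.perm_of_nodup_nodup_toFinset_eq hnd (@List.nodup_range n)
  have hsub : l.toFinset ⊆ (List.range n).toFinset := by
    intro x hx
    rw [List.mem_toFinset] at hx ⊢
    exact List.mem_range.2 (hlt x hx)
  apply Finset.eq_of_subset_of_card_le hsub
  rw [List.toFinset_card_of_nodup hnd, List.toFinset_card_of_nodup (@List.nodup_range n)]
  simp [hlen]

lemma triple_sublist_of_get (l : List ℕ) (i j k : Fin l.length) (hij : (i : ℕ) < j)
    (hjk : (j : ℕ) < k) : [l.get i, l.get j, l.get k] <+ l := by
  have hpw : List.Pairwise (fun x1 x2 : Fin l.length => (x1 : ℕ) < (x2 : ℕ)) [i, j, k] := by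
    refine List.pairwise_cons.2 ⟨?_, List.pairwise_cons.2 ⟨?_, List.pairwise_cons.2
      ⟨fun b hb => absurd hb List.not_mem_nil, List.Pairwise.nil⟩⟩⟩
    · intro b hb
      rcases List.mem_cons.1 hb with rfl | hb
      · exact hij
      · rw [List.mem_singleton] at hb
        subst hb
        omega
    · intro b hb
      rw [List.mem_singleton] at hb
      subst hb
      exact hjk
  have := List.map_getElem_sublist hpw
  simpa using this

lemma has123_ofFn {n : ℕ} (f : Equiv.Perm (Fin n)) :
    Has123 (List.ofFn (fun i => (f i : ℕ)))
      ↔ ∃ a b c : Fin n, a < b ∧ b < c ∧ f a < f b ∧ f b < f c := by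
  set l := List.ofFn (fun i => (f i : ℕ)) with hl
  have hlen : l.length = n := List.length_ofFn
  have egetf : ∀ (ii : Fin l.length), l.get ii = (f (Fin.cast hlen ii) : ℕ) :=
    fun ii => List.get_ofFn _ ii
  constructor
  · rintro ⟨x, y, z, hxy, hyz, hs⟩
    obtain ⟨is, heq, hpw⟩ := List.sublist_eq_map_getElem hs
    rcases is with _ | ⟨i, _ | ⟨j, _ | ⟨k, _ | ⟨w, rest⟩⟩⟩⟩
    · simp at heq
    · simp at heq
    · simp at heq
    case cons.cons.cons.cons => simp at heq
    obtain ⟨hx, hy, hz⟩ : x = l.get i ∧ y = l.get j ∧ z = l.get k := by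
      simp only [List.map_cons, List.map_nil, List.cons.injEq, and_true] at heq
      simp only [List.get_eq_getElem]
      exact heq
    have hij : i < j := List.rel_of_pairwise_cons hpw (List.mem_cons_self)
    have hjk : j < k :=
      List.rel_of_pairwise_cons (List.pairwise_cons.1 hpw).2 (List.mem_cons_self)
    refine ⟨Fin.cast hlen i, Fin.cast hlen j, Fin.cast hlen k, hij, hjk, ?_, ?_⟩
    · rw [Fin.lt_def, ← egetf i, ← egetf j, ← hx, ← hy]
      exact hxy
    · rw [Fin.lt_def, ← egetf j, ← egetf k, ← hy, ← hz]
      exact hyz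
  · rintro ⟨a, b, c, hab, hbc, h1, h2⟩
    have hs := triple_sublist_of_get l (Fin.cast hlen.symm a) (Fin.cast hlen.symm b)
      (Fin.cast hlen.symm c) hab hbc
    rw [egetf, egetf, egetf] at hs
    exact ⟨_, _, _, h1, h2, hs⟩

lemma card_filter_perm_eq_A123 (n : ℕ) :
    (Finset.univ.filter (fun π : Equiv.Perm (Fin n) =>
        ¬ ∃ a b c : Fin n, a < b ∧ b < c ∧ π a < π b ∧ π b < π c)).card = (A123 n).card := by
  apply Finset.card_bij (fun π _ => List.ofFn (fun i => (π i : ℕ)))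
  · intro π hπ
    rw [Finset.mem_filter] at hπ
    apply mem_A123.2
    constructor
    · apply perm_range_of
      · exact List.nodup_ofFn.2 (fun i j hij => π.injective (Fin.val_injective hij))
      · exact List.length_ofFn
      · intro x hx
        rw [List.mem_ofFn] at hx
        obtain ⟨i, rfl⟩ := hx
        exact (π i).2
    · rw [has123_ofFn]
      exact hπ.2
  · intro π₁ _ π₂ _ he
    apply Equiv.ext
    intro i
    have hfe : (fun i => ((π₁ i : ℕ))) = (fun i => ((π₂ i : ℕ))) := List.ofFn_inj.1 he
    exact Fin.val_injective (congrFun hfe i)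
  · intro l hl
    obtain ⟨hlp, hH⟩ := mem_A123.1 hl
    have hlen : l.length = n := by rw [hlp.length_eq, List.length_range]
    have hnd : l.Nodup := hlp.nodup_iff.2 (@List.nodup_range n)
    have hlt : ∀ x ∈ l, x < n := fun x hx => List.mem_range.1 (hlp.subset hx)
    set f : Fin n → Fin n := fun i => ⟨l.get (Fin.cast hlen.symm i), hlt _ (l.get_mem _)⟩
      with hf
    have hinj : Function.Injective f := by
      intro i j hij
      have h1 : l.get (Fin.cast hlen.symm i) = l.get (Fin.cast hlen.symm j) :=
        congrArg Fin.val hij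
      have h2 := List.nodup_iff_injective_get.1 hnd h1
      have h3 : ((Fin.cast hlen.symm i) : ℕ) = ((Fin.cast hlen.symm j) : ℕ) :=
        congrArg Fin.val h2
      exact Fin.ext h3
    let π : Equiv.Perm (Fin n) := Equiv.ofBijective f (Finite.injective_iff_bijective.1 hinj)
    have hofn : List.ofFn (fun i => (π i : ℕ)) = l := by
      apply List.ext_get
      · rw [List.length_ofFn, hlen]
      · intro m h₁ h₂
        rw [List.get_ofFn]
        rfl
    refine ⟨π, Finset.mem_filter.2 ⟨Finset.mem_univ _, ?_⟩, hofn⟩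
    intro hex
    have hx := (has123_ofFn π).2 hex
    rw [hofn] at hx
    exact hH hx


lemma has132_cross {u v : List ℕ} {M x y : ℕ} (hx : x ∈ u) (hy : y ∈ v) (hxy : x < y)
    (hyM : y < M) : Has132 (u ++ M :: v) := by
  refine ⟨x, M, y, hxy, hyM, ?_⟩
  have h1 : [x] <+ u := List.singleton_sublist.2 hx
  have h2 : [M, y] <+ M :: v := List.cons_sublist_cons.2 (List.singleton_sublist.2 hy)
  exact h1.append h2

lemma has132_left {u v : List ℕ} {M : ℕ} (h : Has132 u) : Has132 (u ++ M :: v) := by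
  obtain ⟨a, b, c, h1, h2, hs⟩ := h
  exact ⟨a, b, c, h1, h2, hs.trans (List.sublist_append_left _ _)⟩

lemma has132_right {u v : List ℕ} {M : ℕ} (h : Has132 v) : Has132 (u ++ M :: v) := by
  obtain ⟨a, b, c, h1, h2, hs⟩ := h
  refine ⟨a, b, c, h1, h2, hs.trans (((List.sublist_cons_self _ _).trans
    (List.sublist_append_right _ _)).trans (List.Sublist.refl _))⟩

lemma not_has132_glue {u v : List ℕ} {M : ℕ} (hu : ∀ x ∈ u, x < M) (hv : ∀ y ∈ v, y < M)
    (h1 : ¬ Has132 u) (h2 : ¬ Has132 v) (hcross : ∀ x ∈ u, ∀ y ∈ v, ¬ x < y) :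
    ¬ Has132 (u ++ M :: v) := by
  rintro ⟨a, b, c, hac, hcb, hs⟩
  rw [List.sublist_append_iff] at hs
  obtain ⟨l₁, l₂, heq, hs₁, hs₂⟩ := hs
  rcases l₁ with _ | ⟨p, _ | ⟨q, _ | ⟨r, rest⟩⟩⟩
  · -- l₂ = [a,b,c] <+ M :: v
    rw [List.nil_append] at heq
    subst heq
    rcases triple_sublist_cons hs₂ with h' | ⟨haM, h'⟩
    · exact h2 ⟨a, b, c, hac, hcb, h'⟩
    · subst haM
      have hcv : c ∈ v := h'.subset (List.mem_cons_of_mem _ (List.mem_cons_self))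
      have := hv c hcv
      omega
  · -- l₁ = [p] = [a]
    obtain ⟨hap, hrest⟩ := List.cons_eq_cons.1 heq
    subst hap
    have hau : a ∈ u := hs₁.subset (List.mem_cons_self)
    have hl₂ : l₂ = [b, c] := by simpa using hrest.symm
    subst hl₂
    rcases pair_sublist_cons hs₂ with h' | ⟨hbM, hc⟩
    · have hcv : c ∈ v := h'.subset (List.mem_cons_of_mem _ (List.mem_cons_self))
      exact hcross a hau c hcv hac
    · exact hcross a hau c hc hac
  · -- l₁ = [p,q] = [a,b]
    obtain ⟨hap, hrest⟩ := List.cons_eq_cons.1 heq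
    obtain ⟨hbq, hrest2⟩ := List.cons_eq_cons.1 hrest
    subst hap; subst hbq
    have hbu : b ∈ u := hs₁.subset (List.mem_cons_of_mem _ (List.mem_cons_self))
    have hl₂ : l₂ = [c] := by simpa using hrest2.symm
    subst hl₂
    have hc : c = M ∨ c ∈ v := by
      rcases List.sublist_cons_iff.1 hs₂ with h' | ⟨rr, hr1, hr2⟩
      · exact Or.inr (h'.subset (List.mem_cons_self))
      · obtain ⟨h1', -⟩ := List.cons_eq_cons.1 hr1
        exact Or.inl h1'
    rcases hc with rfl | hcv
    · exact absurd (hu b hbu) (by omega)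
    · have hau : a ∈ u := hs₁.subset (List.mem_cons_self)
      exact hcross a hau c hcv hac
  · -- l₁ has ≥ 3 elements
    have hlen : (3:ℕ) = 3 + rest.length + l₂.length := by
      have := congrArg List.length heq
      simp only [List.length_cons, List.length_append, List.length_nil] at this
      omega
    have hrest : rest = [] := by rw [← List.length_eq_zero_iff]; omega
    have hl₂ : l₂ = [] := by rw [← List.length_eq_zero_iff]; omega
    subst hrest; subst hl₂
    rw [List.append_nil] at heq
    rw [← heq] at hs₁
    exact h1 ⟨a, b, c, hac, hcb, hs₁⟩

lemma has132_map_add {l : List ℕ} {k : ℕ} : Has132 (l.map (· + k)) ↔ Has132 l := by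
  constructor
  · rintro ⟨a, b, c, hac, hcb, hs⟩
    rw [List.sublist_map_iff] at hs
    obtain ⟨l', hsub, heq⟩ := hs
    rcases l' with _ | ⟨a', _ | ⟨b', _ | ⟨c', _ | ⟨w, rest⟩⟩⟩⟩ <;> simp at heq
    obtain ⟨ha, hb, hc⟩ := heq
    exact ⟨a', b', c', by omega, by omega, hsub⟩
  · rintro ⟨a, b, c, hac, hcb, hs⟩
    exact ⟨a + k, b + k, c + k, by omega, by omega, by
      have := hs.map (· + k)
      simpa using this⟩

lemma append_cons_inj {x : ℕ} {u v : List ℕ} : ∀ {u' v' : List ℕ},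
    u ++ x :: v = u' ++ x :: v' → x ∉ u → x ∉ u' → u = u' ∧ v = v' := by
  induction u with
  | nil =>
    intro u' v' h hu hu'
    cases u' with
    | nil =>
      simp only [List.nil_append] at h
      exact ⟨rfl, (List.cons_eq_cons.1 h).2⟩
    | cons c t' =>
      simp only [List.nil_append, List.cons_append] at h
      obtain ⟨hxc, -⟩ := List.cons_eq_cons.1 h
      exact absurd (@List.mem_cons_self _ x t') (by rw [hxc] at hu' ⊢; exact hu')
  | cons b t ih =>
    intro u' v' h hu hu'
    cases u' with
    | nil =>
      simp only [List.nil_append, List.cons_append] at h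
      obtain ⟨hbx, -⟩ := List.cons_eq_cons.1 h
      exact absurd (hbx ▸ @List.mem_cons_self _ b t) hu
    | cons c t' =>
      simp only [List.cons_append] at h
      obtain ⟨hbc, hrest⟩ := List.cons_eq_cons.1 h
      obtain ⟨h1, h2⟩ := ih hrest (fun hh => hu (List.mem_cons_of_mem _ hh))
        (fun hh => hu' (List.mem_cons_of_mem _ hh))
      subst hbc
      exact ⟨by rw [h1], h2⟩


lemma card_A132_zero : (A132 0).card = 1 := by
  have h : A132 0 = {([] : List ℕ)} := by
    ext l
    rw [mem_A132, Finset.mem_singleton]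
    constructor
    · rintro ⟨hp, -⟩
      simpa using hp.eq_nil
    · rintro rfl
      refine ⟨by simp, ?_⟩
      rintro ⟨a, b, c, -, -, hs⟩
      exact absurd (List.eq_nil_of_sublist_nil hs) (by simp)
  rw [h, Finset.card_singleton]

lemma card_A132_succ (n : ℕ) :
    (A132 (n + 1)).card = ∑ j ∈ Finset.range (n + 1), (A132 j).card * (A132 (n - j)).card := by
  have hsig : ∑ j ∈ Finset.range (n + 1), (A132 j).card * (A132 (n - j)).card
      = ((Finset.range (n + 1)).sigma (fun j => A132 j ×ˢ A132 (n - j))).card := by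
    rw [Finset.card_sigma]
    exact Finset.sum_congr rfl (fun j _ => (Finset.card_product _ _).symm)
  rw [hsig]
  refine (Finset.card_bij (fun p _ => (p.2.1.map (· + (n - p.1))) ++ n :: p.2.2) ?_ ?_ ?_).symm
  · rintro ⟨j, u, v⟩ hp
    simp only [Finset.mem_sigma, Finset.mem_range, Finset.mem_product] at hp
    obtain ⟨hj, hu, hv⟩ := hp
    obtain ⟨hup, huH⟩ := mem_A132.1 hu
    obtain ⟨hvp, hvH⟩ := mem_A132.1 hv
    have hjn : j ≤ n := by omega
    have hult : ∀ x ∈ u, x < j := fun x hx => List.mem_range.1 (hup.subset hx)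
    have hvlt : ∀ y ∈ v, y < n - j := fun y hy => List.mem_range.1 (hvp.subset hy)
    have hulen : u.length = j := by rw [hup.length_eq, List.length_range]
    have hvlen : v.length = n - j := by rw [hvp.length_eq, List.length_range]
    have hmaplt : ∀ x ∈ u.map (· + (n - j)), n - j ≤ x ∧ x < n := by
      intro x hx
      rw [List.mem_map] at hx
      obtain ⟨x₀, hx₀, rfl⟩ := hx
      have := hult x₀ hx₀
      omega
    apply mem_A132.2
    constructor
    · apply perm_range_of
      · rw [List.nodup_append]
        refine ⟨List.Nodup.map (add_left_injective _) (hup.nodup_iff.2 List.nodup_range),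
          List.nodup_cons.2 ⟨?_, hvp.nodup_iff.2 List.nodup_range⟩, ?_⟩
        · intro hnv
          have := hvlt n hnv
          omega
        · intro x hxu y hxnv hxy; subst hxy
          obtain ⟨h1, h2⟩ := hmaplt x hxu
          rcases List.mem_cons.1 hxnv with rfl | hxv
          · omega
          · have := hvlt x hxv
            omega
      · simp only [List.length_append, List.length_cons, List.length_map, hulen, hvlen]
        omega
      · intro x hx
        rw [List.mem_append] at hx
        rcases hx with hx | hx
        · have := hmaplt x hx
          omega
        · rcases List.mem_cons.1 hx with rfl | hxv
          · omega
          · have := hvlt x hxv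
            omega
    · apply not_has132_glue
      · intro x hx
        exact (hmaplt x hx).2
      · intro y hy
        have := hvlt y hy
        omega
      · rw [has132_map_add]
        exact huH
      · exact hvH
      · intro x hx y hy
        have h1 := (hmaplt x hx).1
        have h2 := hvlt y hy
        omega
  · rintro ⟨j, u, v⟩ hp ⟨j', u', v'⟩ hp' he
    simp only [Finset.mem_sigma, Finset.mem_range, Finset.mem_product] at hp hp'
    obtain ⟨hj, hu, hv⟩ := hp
    obtain ⟨hj', hu', hv'⟩ := hp'
    obtain ⟨hup, -⟩ := mem_A132.1 hu
    obtain ⟨hup', -⟩ := mem_A132.1 hu'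
    have hult : ∀ x ∈ u, x < j := fun x hx => List.mem_range.1 (hup.subset hx)
    have hult' : ∀ x ∈ u', x < j' := fun x hx => List.mem_range.1 (hup'.subset hx)
    simp only at he
    have hnu : n ∉ u.map (· + (n - j)) := by
      intro hn
      rw [List.mem_map] at hn
      obtain ⟨x₀, hx₀, hx⟩ := hn
      have := hult x₀ hx₀
      omega
    have hnu' : n ∉ u'.map (· + (n - j')) := by
      intro hn
      rw [List.mem_map] at hn
      obtain ⟨x₀, hx₀, hx⟩ := hn
      have := hult' x₀ hx₀
      omega
    obtain ⟨hmapeq, hveq⟩ := append_cons_inj he hnu hnu'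
    have hjj : j = j' := by
      have h1 := congrArg List.length hmapeq
      simp only [List.length_map] at h1
      have h2 : u.length = j := by rw [hup.length_eq, List.length_range]
      have h3 : u'.length = j' := by rw [hup'.length_eq, List.length_range]
      omega
    subst hjj
    have huu : u = u' := List.map_injective_iff.2 (add_left_injective _) hmapeq
    have : (u, v) = (u', v') := by rw [huu, hveq]
    exact congrArg (Sigma.mk j) this
  · intro l hl
    obtain ⟨hlp, hH⟩ := mem_A132.1 hl
    have hnd : l.Nodup := hlp.nodup_iff.2 List.nodup_range
    have hlt : ∀ x ∈ l, x < n + 1 := fun x hx => List.mem_range.1 (hlp.subset hx)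
    have hlen : l.length = n + 1 := by rw [hlp.length_eq, List.length_range]
    have hnmem : n ∈ l := hlp.mem_iff.2 (List.mem_range.2 (by omega))
    obtain ⟨u', v', rfl⟩ := List.append_of_mem hnmem
    have hndsplit := hnd
    rw [List.nodup_append] at hndsplit
    obtain ⟨hndu, hndnv, hdisj⟩ := hndsplit
    obtain ⟨hnnv, hndv⟩ := List.nodup_cons.1 hndnv
    have hnnu : n ∉ u' := fun hn => hdisj _ hn _ (List.mem_cons_self) rfl
    have hult : ∀ x ∈ u', x < n := by
      intro x hx
      have h1 := hlt x (List.mem_append.2 (Or.inl hx))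
      have h2 : x ≠ n := fun hh => hnnu (hh ▸ hx)
      omega
    have hvlt : ∀ y ∈ v', y < n := by
      intro y hy
      have h1 := hlt y (List.mem_append.2 (Or.inr (List.mem_cons_of_mem _ hy)))
      have h2 : y ≠ n := fun hh => hnnv (hh ▸ hy)
      omega
    have hcross : ∀ x ∈ u', ∀ y ∈ v', y < x := by
      intro x hx y hy
      have h1 : ¬ x < y := fun hxy => hH (has132_cross hx hy hxy (hvlt y hy))
      have h2 : x ≠ y := fun hh => hdisj _ hx _ (List.mem_cons_of_mem _ (hh ▸ hy)) rfl
      omega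
    obtain ⟨j, hj⟩ : ∃ jj : ℕ, jj = u'.length := ⟨u'.length, rfl⟩
    have hlensplit : j + 1 + v'.length = n + 1 := by
      simp only [List.length_append, List.length_cons] at hlen
      omega
    have hjn : j ≤ n := by omega
    have hvlen : v'.length = n - j := by omega
    have hlow : ∀ x ∈ u', n - j ≤ x := by
      intro x hx
      have hsubv : v'.toFinset ⊆ Finset.range x := by
        intro y hy
        rw [List.mem_toFinset] at hy
        exact Finset.mem_range.2 (hcross x hx y hy)
      have hcard := Finset.card_le_card hsubv
      rw [List.toFinset_card_of_nodup hndv, Finset.card_range] at hcard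
      omega
    have hhigh : ∀ y ∈ v', y < n - j := by
      intro y hy
      have hsubu : u'.toFinset ⊆ Finset.Ioo y n := by
        intro x hx
        rw [List.mem_toFinset] at hx
        exact Finset.mem_Ioo.2 ⟨hcross x hx y hy, hult x hx⟩
      have hcard := Finset.card_le_card hsubu
      rw [List.toFinset_card_of_nodup hndu, Nat.card_Ioo] at hcard
      have hyn := hvlt y hy
      omega
    have humap : (u'.map (· - (n - j))).map (· + (n - j)) = u' := by
      rw [List.map_map]
      have : ∀ a ∈ u', ((fun x => x + (n - j)) ∘ (fun x => x - (n - j))) a = id a := by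
        intro a ha
        have := hlow a ha
        simp only [Function.comp_apply, id_eq]
        omega
      rw [List.map_congr_left this, List.map_id]
    set u := u'.map (· - (n - j)) with hu
    have hu_nodup : u.Nodup := List.Nodup.of_map _ (by rw [humap]; exact hndu)
    have hulen : u.length = j := by rw [hu, List.length_map, ← hj]
    have hu_perm : u ~ List.range j := by
      apply perm_range_of hu_nodup hulen
      intro x hx
      rw [hu, List.mem_map] at hx
      obtain ⟨x₀, hx₀, rfl⟩ := hx
      have h1 := hlow x₀ hx₀
      have h2 := hult x₀ hx₀
      omega
    have hv_perm : v' ~ List.range (n - j) := perm_range_of hndv hvlen hhigh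
    have huH : ¬ Has132 u := by
      intro h
      have h2 : Has132 u' := by
        rw [← humap]
        exact has132_map_add.2 h
      exact hH (has132_left h2)
    have hvH : ¬ Has132 v' := fun h => hH (has132_right h)
    refine ⟨⟨j, (u, v')⟩, ?_, ?_⟩
    · simp only [Finset.mem_sigma, Finset.mem_range, Finset.mem_product]
      exact ⟨by omega, mem_A132.2 ⟨hu_perm, huH⟩, mem_A132.2 ⟨hv_perm, hvH⟩⟩
    · simp only
      rw [humap]

lemma card_A132_catalan : ∀ n : ℕ, (A132 n).card = catalan n := by
  intro n
  induction n using Nat.strong_induction_on with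
  | _ n ih =>
    match n with
    | 0 => rw [card_A132_zero, catalan_zero]
    | (m + 1) =>
      rw [card_A132_succ, catalan_succ, ← Fin.sum_univ_eq_sum_range
        (fun j => (A132 j).card * (A132 (m - j)).card) (m + 1)]
      apply Finset.sum_congr rfl
      intro i _
      rw [ih i (by omega), ih (m - (i : ℕ)) (by omega)]


lemma card_A123_catalan (n : ℕ) : (A123 n).card = catalan n := by
  rw [card_A123_eq_card_A132, card_A132_catalan]

end SS

/-- The number of 123-avoiding permutations of `{1,…,n}` is the Catalan number
`C(2n,n)/(n+1)`, hence the probability that a uniformly random permutation of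
`{1,…,n}` has no increasing subsequence of length 3 is `C(2n,n)/(n+1)!`. -/
theorem stmt_17 (n : ℕ) :
    ((Finset.univ.filter (fun π : Equiv.Perm (Fin n) =>
        ¬ ∃ a b c : Fin n, a < b ∧ b < c ∧ π a < π b ∧ π b < π c)).card : ℚ)
      = (Nat.choose (2 * n) n : ℚ) / ((n : ℚ) + 1) ∧
    ((Finset.univ.filter (fun π : Equiv.Perm (Fin n) =>
        ¬ ∃ a b c : Fin n, a < b ∧ b < c ∧ π a < π b ∧ π b < π c)).card : ℚ)
        / (Nat.factorial n : ℚ)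
      = (Nat.choose (2 * n) n : ℚ) / (Nat.factorial (n + 1) : ℚ) := by
  have hcard : (Finset.univ.filter (fun π : Equiv.Perm (Fin n) =>
      ¬ ∃ a b c : Fin n, a < b ∧ b < c ∧ π a < π b ∧ π b < π c)).card = catalan n := by
    rw [SS.card_filter_perm_eq_A123, SS.card_A123_eq_card_A132, SS.card_A132_catalan]
  have hbin : ((n : ℚ) + 1) * (catalan n : ℚ) = (Nat.choose (2 * n) n : ℚ) := by
    have h2 : (n + 1) * catalan n = Nat.choose (2 * n) n :=
      succ_mul_catalan_eq_centralBinom n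
    exact_mod_cast h2
  have hne : ((n : ℚ) + 1) ≠ 0 := by positivity
  have h1 : (((Finset.univ.filter (fun π : Equiv.Perm (Fin n) =>
      ¬ ∃ a b c : Fin n, a < b ∧ b < c ∧ π a < π b ∧ π b < π c)).card : ℕ) : ℚ)
      = (Nat.choose (2 * n) n : ℚ) / ((n : ℚ) + 1) := by
    rw [hcard, eq_div_iff hne, mul_comm]
    exact hbin
  refine ⟨h1, ?_⟩
  rw [h1]
  have hfact : ((Nat.factorial (n + 1) : ℚ)) = ((n : ℚ) + 1) * (Nat.factorial n : ℚ) := by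
    rw [Nat.factorial_succ]
    push_cast
    ring
  rw [div_div, hfact]
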